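/- Suppose that for each n ≥ 0 and each t ∈ ℝ: the vector functions ℙ_n(t) : ℝ² → ℝ^{n+1} satisfy the three-term relations x·ℙ_n(t)(x,y) = L_{n,1} ℙ_{n+1}(t)(x,y) + D_{n,1}(t) ℙ_n(t)(x,y) + C_{n,1}(t) ℙ_{n−1}(t)(x,y) and y·ℙ_n(t)(x,y) = L_{n,2} ℙ_{n+1}(t)(x,y) + D_{n,2}(t) ℙ_n(t)(x,y) + C_{n,2}(t) ℙ_{n−1}(t)(x,y) for all (x,y); the family of component functions {(ℙ_n(t))_j : 0 ≤ j ≤ n, n ≥ 0} is linearly independent over ℝ; every entry of D_{n,i}(t) and C_{n,i}(t) is differentiable in t; and for every (x,y) and n ≥ 1, t ↦ ℙ_n(t)(x,y) is differentiable with ∂_t ℙ_n(t)(x,y) = C_n(t) ℙ_{n−1}(t)(x,y), where C_n(t) = C_{n,1}(t) + C_{n,2}(t). Then for i = 1,2 and all n ≥ 1 and all t, the 2D Toda lattice equations hold: Ḋ_{n,i}(t) = C_n(t) L_{n−1,i} − L_{n,i} C_{n+1}(t) and Ċ_{n,i}(t) = C_n(t) D_{n−1,i}(t) − D_{n,i}(t)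 C_n(t). -/

import Mathlib

open Matrix

/-- The shift matrix `L_{n,1}` of size `(n+1) × (n+2)`: `(L_{n,1})_{ij} = 1` iff `j = i`. -/
def shiftL1 (n : ℕ) : Matrix (Fin (n + 1)) (Fin (n + 2)) ℝ :=
  fun i j => if (j : ℕ) = (i : ℕ) then 1 else 0

/-- The shift matrix `L_{n,2}` of size `(n+1) × (n+2)`: `(L_{n,2})_{ij} = 1` iff `j = i + 1`. -/
def shiftL2 (n : ℕ) : Matrix (Fin (n + 1)) (Fin (n + 2)) ℝ :=
  fun i j => if (j : ℕ) = (i : ℕ) + 1 then 1 else 0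

/-- If the monic OPS evolves by `∂_t ℙ_n = C_n ℙ_{n−1}` then the coefficients of the three
term relations satisfy the 2D Toda lattice
`Ḋ_{n,i} = C_n L_{n−1,i} − L_{n,i} C_{n+1}` and `Ċ_{n,i} = C_n D_{n−1,i} − D_{n,i} C_n`
(stated for `n ≥ 1`, i.e. at index `n + 1` for `n : ℕ`). -/


lemma toda_mv_apply {m n : ℕ} (A : Matrix (Fin m) (Fin n) ℝ) (v : Fin n → ℝ) (i : Fin m) :
    A.mulVec v i = ∑ j, A i j * v j := by
  simp [Matrix.mulVec, dotProduct]

lemma toda_li3 (P : (n : ℕ) → ℝ → ℝ × ℝ → Fin (n + 1) → ℝ) (t : ℝ)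
    (hli : LinearIndependent ℝ
      (fun p : Σ n : ℕ, Fin (n + 1) => fun xy : ℝ × ℝ => P p.1 t xy p.2))
    (n : ℕ) (a : Fin (n+3) → ℝ) (b : Fin (n+2) → ℝ) (c : Fin (n+1) → ℝ)
    (h : ∀ xy : ℝ × ℝ, ∑ j, a j * P (n+2) t xy j + ∑ j, b j * P (n+1) t xy j
      + ∑ j, c j * P n t xy j = 0) :
    (∀ j, a j = 0) ∧ (∀ j, b j = 0) ∧ (∀ j, c j = 0) := by
  classical
  set e : (Fin (n+3) ⊕ (Fin (n+2) ⊕ Fin (n+1))) → Σ m : ℕ, Fin (m+1) :=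
    Sum.elim (fun j => ⟨n+2, j⟩) (Sum.elim (fun j => ⟨n+1, j⟩) (fun j => ⟨n, j⟩)) with he
  have hinj : Function.Injective e := by
    rintro (j | j | j) (j' | j' | j') huv <;>
      simp only [he, Sum.elim_inl, Sum.elim_inr, Sigma.mk.inj_iff] at huv <;>
      first
        | (obtain ⟨h1, h2⟩ := huv; first | omega | simp_all)
        | omega
  have hli' := (hli.comp e hinj)
  rw [Fintype.linearIndependent_iff] at hli'
  have hz := hli' (Sum.elim a (Sum.elim b c)) ?_
  · refine ⟨fun j => hz (Sum.inl j), fun j => hz (Sum.inr (Sum.inl j)),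
      fun j => hz (Sum.inr (Sum.inr j))⟩
  · funext xy
    have := h xy
    simp only [Fintype.sum_sum_type, Finset.sum_apply, Pi.smul_apply, Function.comp_apply,
      smul_eq_mul, he, Sum.elim_inl, Sum.elim_inr, Pi.zero_apply]
    linarith

/-- Master lemma for levels `≥ 2`. -/
lemma toda_master_general
    (P : (n : ℕ) → ℝ → ℝ × ℝ → Fin (n + 1) → ℝ)
    (Ct : (n : ℕ) → ℝ → Matrix (Fin (n + 1)) (Fin n) ℝ)
    (L : (n : ℕ) → Matrix (Fin (n + 1)) (Fin (n + 2)) ℝ)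
    (Dm : (n : ℕ) → ℝ → Matrix (Fin (n + 1)) (Fin (n + 1)) ℝ)
    (Cm : (n : ℕ) → ℝ → Matrix (Fin (n + 1)) (Fin n) ℝ)
    (coord : ℝ × ℝ → ℝ)
    (k : ℕ) (t : ℝ)
    (h3a : ∀ (s : ℝ) (x y : ℝ),
      coord (x, y) • P (k + 1) s (x, y) = (L (k+1)).mulVec (P (k+2) s (x, y))
        + (Dm (k+1) s).mulVec (P (k+1) s (x, y)) + (Cm (k+1) s).mulVec (P k s (x, y)))
    (h3b : ∀ (s : ℝ) (x y : ℝ),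
      coord (x, y) • P (k + 2) s (x, y) = (L (k+2)).mulVec (P (k+3) s (x, y))
        + (Dm (k+2) s).mulVec (P (k+2) s (x, y)) + (Cm (k+2) s).mulVec (P (k+1) s (x, y)))
    (hdot : ∀ (m : ℕ) (x y : ℝ) (s : ℝ) (j : Fin (m + 2)),
      HasDerivAt (fun r => P (m + 1) r (x, y) j) ((Ct (m + 1) s).mulVec (P m s (x, y)) j) s)
    (hDd : ∀ i j, DifferentiableAt ℝ (fun s => Dm (k+2) s i j) t)
    (hCd : ∀ i j, DifferentiableAt ℝ (fun s => Cm (k+2) s i j) t)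
    (hli : LinearIndependent ℝ
      (fun p : Σ n : ℕ, Fin (n + 1) => fun xy : ℝ × ℝ => P p.1 t xy p.2)) :
    (∀ i j, HasDerivAt (fun s => Dm (k+2) s i j)
      ((Ct (k+2) t * L (k+1) - L (k+2) * Ct (k+3) t) i j) t)
    ∧ (∀ i j, HasDerivAt (fun s => Cm (k+2) s i j)
      ((Ct (k+2) t * Dm (k+1) t - Dm (k+2) t * Ct (k+2) t) i j) t) := by
  classical
  -- the coefficient equations, for each row i
  have key : ∀ (i : Fin (k+3)),
      (∀ j, (Ct (k+2) t * L (k+1) - L (k+2) * Ct (k+3) t) i j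
          - deriv (fun s => Dm (k+2) s i j) t = 0)
      ∧ (∀ j, (Ct (k+2) t * Dm (k+1) t - Dm (k+2) t * Ct (k+2) t) i j
          - deriv (fun s => Cm (k+2) s i j) t = 0) := by
    intro i
    have main := toda_li3 P t hli k
      (fun j => (Ct (k+2) t * L (k+1) - L (k+2) * Ct (k+3) t) i j
          - deriv (fun s => Dm (k+2) s i j) t)
      (fun j => (Ct (k+2) t * Dm (k+1) t - Dm (k+2) t * Ct (k+2) t) i j
          - deriv (fun s => Cm (k+2) s i j) t)
      (fun j => (Ct (k+2) t * Cm (k+1) t - Cm (k+2) t * Ct (k+1) t) i j) ?_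
    · exact ⟨main.1, main.2.1⟩
    intro xy
    obtain ⟨x, y⟩ := xy
    -- derivative of the left side of the three-term relation at level k+2
    have hF : HasDerivAt (fun s => coord (x, y) * P (k+2) s (x, y) i)
        (coord (x, y) * ((Ct (k+2) t).mulVec (P (k+1) t (x, y)) i)) t :=
      (hdot (k+1) x y t i).const_mul _
    -- derivative of the right side
    have g1 : HasDerivAt (fun s => (L (k+2)).mulVec (P (k+3) s (x, y)) i)
        ((L (k+2)).mulVec ((Ct (k+3) t).mulVec (P (k+2) t (x, y))) i) t := by
      have := HasDerivAt.fun_sum (fun j (_ : j ∈ Finset.univ) =>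
        ((hdot (k+2) x y t j).const_mul ((L (k+2)) i j)))
      simpa only [← toda_mv_apply] using this
    have g2 : HasDerivAt (fun s => (Dm (k+2) s).mulVec (P (k+2) s (x, y)) i)
        ((∑ j, deriv (fun s => Dm (k+2) s i j) t * P (k+2) t (x, y) j)
          + (Dm (k+2) t).mulVec ((Ct (k+2) t).mulVec (P (k+1) t (x, y))) i) t := by
      have := HasDerivAt.fun_sum (fun j (_ : j ∈ Finset.univ) =>
        ((hDd i j).hasDerivAt.fun_mul (hdot (k+1) x y t j)))
      simp only [← toda_mv_apply] at this
      simpa only [Finset.sum_add_distrib, toda_mv_apply, Finset.mul_sum] using this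
    have g3 : HasDerivAt (fun s => (Cm (k+2) s).mulVec (P (k+1) s (x, y)) i)
        ((∑ j, deriv (fun s => Cm (k+2) s i j) t * P (k+1) t (x, y) j)
          + (Cm (k+2) t).mulVec ((Ct (k+1) t).mulVec (P k t (x, y))) i) t := by
      have := HasDerivAt.fun_sum (fun j (_ : j ∈ Finset.univ) =>
        ((hCd i j).hasDerivAt.fun_mul (hdot k x y t j)))
      simpa only [Finset.sum_add_distrib, toda_mv_apply, Finset.mul_sum] using this
    have hG := (g1.add g2).add g3
    have hFG : (fun s => coord (x, y) * P (k+2) s (x, y) i)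
        = (fun s => (L (k+2)).mulVec (P (k+3) s (x, y)) i
            + (Dm (k+2) s).mulVec (P (k+2) s (x, y)) i
            + (Cm (k+2) s).mulVec (P (k+1) s (x, y)) i) := by
      funext s
      have := congrFun (h3b s x y) i
      simpa [Pi.smul_apply, smul_eq_mul] using this
    rw [hFG] at hF
    have keyv := hF.unique hG
    -- expand the left side using the relation at level k+1
    have hls : coord (x, y) * ((Ct (k+2) t).mulVec (P (k+1) t (x, y)) i)
        = (Ct (k+2) t).mulVec ((L (k+1)).mulVec (P (k+2) t (x, y))) i
          + (Ct (k+2) t).mulVec ((Dm (k+1) t).mulVec (P (k+1) t (x, y))) i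
          + (Ct (k+2) t).mulVec ((Cm (k+1) t).mulVec (P k t (x, y))) i := by
      rw [toda_mv_apply, Finset.mul_sum]
      rw [toda_mv_apply, toda_mv_apply, toda_mv_apply, ← Finset.sum_add_distrib, ← Finset.sum_add_distrib]
      refine Finset.sum_congr rfl fun j _ => ?_
      have := congrFun (h3a t x y) j
      simp only [Pi.smul_apply, smul_eq_mul, Pi.add_apply] at this
      calc coord (x, y) * (Ct (k+2) t i j * P (k+1) t (x, y) j)
          = Ct (k+2) t i j * (coord (x, y) * P (k+1) t (x, y) j) := by ring
        _ = Ct (k+2) t i j * ((L (k+1)).mulVec (P (k+2) t (x, y)) j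
              + (Dm (k+1) t).mulVec (P (k+1) t (x, y)) j
              + (Cm (k+1) t).mulVec (P k t (x, y)) j) := by rw [this]
        _ = _ := by ring
    rw [hls] at keyv
    -- now assemble the coefficient identity
    simp only [Matrix.sub_apply, Matrix.mul_apply]
    simp only [Matrix.mulVec_mulVec] at keyv
    simp only [sub_mul, Finset.sum_sub_distrib, Finset.sum_mul]
    simp only [toda_mv_apply, Matrix.mul_apply, Finset.sum_mul] at keyv ⊢
    linarith [keyv]

  refine ⟨fun i j => ?_, fun i j => ?_⟩
  · have hd : deriv (fun s => Dm (k+2) s i j) t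
        = (Ct (k+2) t * L (k+1) - L (k+2) * Ct (k+3) t) i j := by
      have := (key i).1 j; linarith
    exact hd ▸ (hDd i j).hasDerivAt
  · have hd : deriv (fun s => Cm (k+2) s i j) t
        = (Ct (k+2) t * Dm (k+1) t - Dm (k+2) t * Ct (k+2) t) i j := by
      have := (key i).2 j; linarith
    exact hd ▸ (hCd i j).hasDerivAt

/-- Master lemma for level `1`. -/
lemma toda_master_level1
    (P : (n : ℕ) → ℝ → ℝ × ℝ → Fin (n + 1) → ℝ)
    (Ct : (n : ℕ) → ℝ → Matrix (Fin (n + 1)) (Fin n) ℝ)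
    (L : (n : ℕ) → Matrix (Fin (n + 1)) (Fin (n + 2)) ℝ)
    (Dm : (n : ℕ) → ℝ → Matrix (Fin (n + 1)) (Fin (n + 1)) ℝ)
    (Cm : (n : ℕ) → ℝ → Matrix (Fin (n + 1)) (Fin n) ℝ)
    (coord : ℝ × ℝ → ℝ)
    (e : Fin 2) (t : ℝ)
    (h30 : ∀ (s x y : ℝ), coord (x, y) * P 0 s (x, y) 0
      = P 1 s (x, y) e + Dm 0 s 0 0 * P 0 s (x, y) 0)
    (h31 : ∀ (s x y : ℝ),
      coord (x, y) • P 1 s (x, y) = (L 1).mulVec (P 2 s (x, y))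
        + (Dm 1 s).mulVec (P 1 s (x, y)) + (Cm 1 s).mulVec (P 0 s (x, y)))
    (hL0 : ∀ v : Fin 2 → ℝ, ∑ j, L 0 0 j * v j = v e)
    (hLinj : ∀ M : Matrix (Fin 2) (Fin 2) ℝ, M * L 1 = 0 → M = 0)
    (hdot : ∀ (m : ℕ) (x y : ℝ) (s : ℝ) (j : Fin (m + 2)),
      HasDerivAt (fun r => P (m + 1) r (x, y) j) ((Ct (m + 1) s).mulVec (P m s (x, y)) j) s)
    (hD0d : DifferentiableAt ℝ (fun s => Dm 0 s 0 0) t)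
    (hDd : ∀ i j, DifferentiableAt ℝ (fun s => Dm 1 s i j) t)
    (hCd : ∀ (i : Fin 2) (j : Fin 1), DifferentiableAt ℝ (fun s => Cm 1 s i j) t)
    (hli : LinearIndependent ℝ
      (fun p : Σ n : ℕ, Fin (n + 1) => fun xy : ℝ × ℝ => P p.1 t xy p.2)) :
    (∀ i j, HasDerivAt (fun s => Dm 1 s i j) ((Ct 1 t * L 0 - L 1 * Ct 2 t) i j) t)
    ∧ (∀ i j, HasDerivAt (fun s => Cm 1 s i j) ((Ct 1 t * Dm 0 t - Dm 1 t * Ct 1 t) i j) t) := by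
  classical
  set M : Matrix (Fin 2) (Fin 2) ℝ :=
    Ct 1 t * L 0 - L 1 * Ct 2 t - Matrix.of (fun i j => deriv (fun s => Dm 1 s i j) t) with hM
  set N : Fin 2 → ℝ := fun i => (Ct 1 t * Dm 0 t - Dm 1 t * Ct 1 t) i 0 with hN
  set c' : Fin 2 → ℝ := fun i => deriv (fun s => Cm 1 s i 0) t with hc'
  -- Step A : derivative of G_i(s) = (Cm 1 s ⬝ P 0 s) i
  have hGd : ∀ (x y : ℝ) (i : Fin 2),
      HasDerivAt (fun s => (Cm 1 s).mulVec (P 0 s (x, y)) i)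
        (M.mulVec (P 1 t (x, y)) i + N i * P 0 t (x, y) 0) t := by
    intro x y i
    have g0 : HasDerivAt (fun s => coord (x, y) * P 1 s (x, y) i)
        (coord (x, y) * ((Ct 1 t).mulVec (P 0 t (x, y)) i)) t :=
      (hdot 0 x y t i).const_mul _
    have g1 : HasDerivAt (fun s => (L 1).mulVec (P 2 s (x, y)) i)
        ((L 1).mulVec ((Ct 2 t).mulVec (P 1 t (x, y))) i) t := by
      have := HasDerivAt.fun_sum (fun j (_ : j ∈ Finset.univ) =>
        ((hdot 1 x y t j).const_mul ((L 1) i j)))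
      simpa only [← toda_mv_apply] using this
    have g2 : HasDerivAt (fun s => (Dm 1 s).mulVec (P 1 s (x, y)) i)
        ((∑ j, deriv (fun s => Dm 1 s i j) t * P 1 t (x, y) j)
          + (Dm 1 t).mulVec ((Ct 1 t).mulVec (P 0 t (x, y))) i) t := by
      have := HasDerivAt.fun_sum (fun j (_ : j ∈ Finset.univ) =>
        ((hDd i j).hasDerivAt.fun_mul (hdot 0 x y t j)))
      simpa only [Finset.sum_add_distrib, toda_mv_apply, Finset.mul_sum] using this
    have hfun : (fun s => (Cm 1 s).mulVec (P 0 s (x, y)) i)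
        = (fun s => coord (x, y) * P 1 s (x, y) i - (L 1).mulVec (P 2 s (x, y)) i
            - (Dm 1 s).mulVec (P 1 s (x, y)) i) := by
      funext s
      have := congrFun (h31 s x y) i
      simp only [Pi.smul_apply, smul_eq_mul, Pi.add_apply] at this
      linarith
    rw [show (fun s => (Cm 1 s).mulVec (P 0 s (x, y)) i) = _ from hfun]
    have hval : coord (x, y) * ((Ct 1 t).mulVec (P 0 t (x, y)) i)
          - (L 1).mulVec ((Ct 2 t).mulVec (P 1 t (x, y))) i
          - ((∑ j, deriv (fun s => Dm 1 s i j) t * P 1 t (x, y) j)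
            + (Dm 1 t).mulVec ((Ct 1 t).mulVec (P 0 t (x, y))) i)
        = M.mulVec (P 1 t (x, y)) i + N i * P 0 t (x, y) 0 := by
      have h30t := h30 t x y
      have he2 : L 0 0 0 * P 1 t (x, y) 0 + L 0 0 1 * P 1 t (x, y) 1 = P 1 t (x, y) e := by
        have := hL0 (P 1 t (x, y))
        simpa [Nat.reduceAdd, Fin.sum_univ_two] using this
      rw [hM, hN]
      simp only [Matrix.mulVec_mulVec, toda_mv_apply, Matrix.mul_apply, Matrix.sub_apply,
        Matrix.of_apply, Nat.reduceAdd, Fin.sum_univ_one, Fin.sum_univ_two, Fin.sum_univ_three]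
      linear_combination Ct 1 t i 0 * h30t - Ct 1 t i 0 * he2
    exact hval ▸ (g0.sub g1).sub g2
  -- Step B : two derivatives of H_i(s) = Cm 1 s i 0 * P 1 s (x,y) e
  have key : ∀ (x y : ℝ) (i : Fin 2),
      c' i * P 1 t (x, y) e + Cm 1 t i 0 * ((Ct 1 t).mulVec (P 0 t (x, y)) e)
        = (0 - deriv (fun s => Dm 0 s 0 0) t) * ((Cm 1 t).mulVec (P 0 t (x, y)) i)
          + (coord (x, y) - Dm 0 t 0 0)
            * (M.mulVec (P 1 t (x, y)) i + N i * P 0 t (x, y) 0) := by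
    intro x y i
    have w1 : HasDerivAt (fun s => Cm 1 s i 0 * P 1 s (x, y) e)
        (c' i * P 1 t (x, y) e + Cm 1 t i 0 * ((Ct 1 t).mulVec (P 0 t (x, y)) e)) t :=
      (hCd i 0).hasDerivAt.mul (hdot 0 x y t e)
    have w2 : HasDerivAt (fun s => (coord (x, y) - Dm 0 s 0 0) * ((Cm 1 s).mulVec (P 0 s (x, y)) i))
        ((0 - deriv (fun s => Dm 0 s 0 0) t) * ((Cm 1 t).mulVec (P 0 t (x, y)) i)
          + (coord (x, y) - Dm 0 t 0 0)
            * (M.mulVec (P 1 t (x, y)) i + N i * P 0 t (x, y) 0)) t :=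
      ((hasDerivAt_const t (coord (x, y))).sub hD0d.hasDerivAt).mul (hGd x y i)
    have hfun : (fun s => Cm 1 s i 0 * P 1 s (x, y) e)
        = (fun s => (coord (x, y) - Dm 0 s 0 0) * ((Cm 1 s).mulVec (P 0 s (x, y)) i)) := by
      funext s
      have h1 : P 1 s (x, y) e = coord (x, y) * P 0 s (x, y) 0 - Dm 0 s 0 0 * P 0 s (x, y) 0 := by
        have := h30 s x y; linarith
      simp only [toda_mv_apply, Nat.reduceAdd, Fin.sum_univ_one]
      rw [h1]; ring
    rw [hfun] at w1
    exact w1.unique w2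
  -- Step C : assemble coefficients and apply linear independence
  have hrows : ∀ i : Fin 2, (∀ j : Fin 3, (M * L 1) i j = 0)
      ∧ ((M * Dm 1 t) i e - Dm 0 t 0 0 * M i e + (N i - c' i) = 0) := by
    intro i
    have main := toda_li3 P t hli 0
      (fun j => (M * L 1) i j)
      (fun j => (M * Dm 1 t) i j - Dm 0 t 0 0 * M i j + (if j = e then N i - c' i else 0))
      (fun _ => (M * Cm 1 t) i 0
        - (deriv (fun s => Dm 0 s 0 0) t + Ct 1 t e 0) * Cm 1 t i 0) ?_
    · refine ⟨main.1, ?_⟩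
      have hb := main.2.1 e
      simpa only [if_pos rfl, reduceIte] using hb
    intro xy
    obtain ⟨x, y⟩ := xy
    have k1 := key x y i
    have e0 : ∀ j : Fin 2, coord (x, y) * P 1 t (x, y) j
        = (L 1).mulVec (P 2 t (x, y)) j + (Dm 1 t).mulVec (P 1 t (x, y)) j
          + (Cm 1 t).mulVec (P 0 t (x, y)) j := by
      intro j
      have := congrFun (h31 t x y) j
      simpa only [Pi.smul_apply, smul_eq_mul, Pi.add_apply] using this
    have h30t := h30 t x y
    have hP1e : (coord (x, y) - Dm 0 t 0 0) * P 0 t (x, y) 0 = P 1 t (x, y) e := by linarith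
    simp only [toda_mv_apply, Matrix.mul_apply, Nat.reduceAdd, Fin.sum_univ_one, Fin.sum_univ_two,
      Fin.sum_univ_three] at k1 e0 ⊢
    rcases Fin.exists_fin_two.mp ⟨e, rfl⟩ with rfl | rfl <;>
      simp only [ite_mul, zero_mul, Fin.isValue, show (0 : Fin 2) ≠ 1 by decide,
        show (1 : Fin 2) ≠ 0 by decide, if_true, if_false, reduceIte] <;>
      linear_combination (-1 : ℝ) * k1 - M i 0 * e0 0 - M i 1 * e0 1 - N i * hP1e
  -- extract the conclusions
  have hML : M * L 1 = 0 := by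
    ext i j; exact (hrows i).1 j
  have hM0 : M = 0 := hLinj M hML
  constructor
  · intro i j
    have h2 : (Ct 1 t * L 0 - L 1 * Ct 2 t
        - Matrix.of (fun i j => deriv (fun s => Dm 1 s i j) t)) i j = 0 := by
      rw [← hM]; exact congrFun (congrFun hM0 i) j
    simp only [Matrix.sub_apply, Matrix.of_apply] at h2
    have h3 : deriv (fun s => Dm 1 s i j) t = (Ct 1 t * L 0 - L 1 * Ct 2 t) i j := by
      simp only [Matrix.sub_apply]; linarith
    exact h3 ▸ (hDd i j).hasDerivAt
  · intro i j
    have hj : j = 0 := Subsingleton.elim j 0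
    subst hj
    have h2 := (hrows i).2
    have hz1 : (M * Dm 1 t) i e = 0 := by rw [hM0]; simp
    have hz2 : Dm 0 t 0 0 * M i e = 0 := by
      have : M i e = 0 := by rw [hM0]; simp
      rw [this]; ring
    have hNi : N i = (Ct 1 t * Dm 0 t - Dm 1 t * Ct 1 t) i 0 := by rw [hN]
    have hci : c' i = deriv (fun s => Cm 1 s i 0) t := by rw [hc']
    have h3 : deriv (fun s => Cm 1 s i 0) t = (Ct 1 t * Dm 0 t - Dm 1 t * Ct 1 t) i 0 := by
      linarith
    exact h3 ▸ (hCd i 0).hasDerivAt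

theorem toda_lattice_of_dot_P
    (P : (n : ℕ) → ℝ → ℝ × ℝ → Fin (n + 1) → ℝ)
    (D1 D2 : (n : ℕ) → ℝ → Matrix (Fin (n + 1)) (Fin (n + 1)) ℝ)
    (C1 C2 : (n : ℕ) → ℝ → Matrix (Fin (n + 1)) (Fin n) ℝ)
    -- three term relation in the variable `x`, at level `0` (the `C_{0,1} ℙ_{-1}` term vanishes)
    (h3x0 : ∀ (t : ℝ) (x y : ℝ),
      x • P 0 t (x, y) = (shiftL1 0).mulVec (P 1 t (x, y)) + (D1 0 t).mulVec (P 0 t (x, y)))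
    -- three term relation in the variable `x`, at level `n+1`
    (h3x : ∀ (n : ℕ) (t : ℝ) (x y : ℝ),
      x • P (n + 1) t (x, y) = (shiftL1 (n + 1)).mulVec (P (n + 2) t (x, y))
        + (D1 (n + 1) t).mulVec (P (n + 1) t (x, y)) + (C1 (n + 1) t).mulVec (P n t (x, y)))
    -- three term relation in the variable `y`, at level `0`
    (h3y0 : ∀ (t : ℝ) (x y : ℝ),
      y • P 0 t (x, y) = (shiftL2 0).mulVec (P 1 t (x, y)) + (D2 0 t).mulVec (P 0 t (x, y)))
    -- three term relation in the variable `y`, at level `n+1`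
    (h3y : ∀ (n : ℕ) (t : ℝ) (x y : ℝ),
      y • P (n + 1) t (x, y) = (shiftL2 (n + 1)).mulVec (P (n + 2) t (x, y))
        + (D2 (n + 1) t).mulVec (P (n + 1) t (x, y)) + (C2 (n + 1) t).mulVec (P n t (x, y)))
    -- for each `t`, the family of all component functions is linearly independent over ℝ
    (hli : ∀ t : ℝ, LinearIndependent ℝ
      (fun p : Σ n : ℕ, Fin (n + 1) => fun xy : ℝ × ℝ => P p.1 t xy p.2))
    -- every entry of `D_{n,i}(t)` and `C_{n,i}(t)` is differentiable in `t`
    (hD1 : ∀ (n : ℕ) i j, Differentiable ℝ (fun t => D1 n t i j))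
    (hD2 : ∀ (n : ℕ) i j, Differentiable ℝ (fun t => D2 n t i j))
    (hC1 : ∀ (n : ℕ) i j, Differentiable ℝ (fun t => C1 n t i j))
    (hC2 : ∀ (n : ℕ) i j, Differentiable ℝ (fun t => C2 n t i j))
    -- evolution of the polynomials: `∂_t ℙ_n = C_n ℙ_{n−1}` for `n ≥ 1`,
    -- where `C_n = C_{n,1} + C_{n,2}`
    (hdotP : ∀ (n : ℕ) (x y : ℝ) (t : ℝ) (j : Fin (n + 2)),
      HasDerivAt (fun s => P (n + 1) s (x, y) j)
        (((C1 (n + 1) t + C2 (n + 1) t).mulVec (P n t (x, y))) j) t) :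
    ∀ (n : ℕ) (t : ℝ),
      -- `Ḋ_{n+1,i}(t) = C_{n+1}(t) L_{n,i} − L_{n+1,i} C_{n+2}(t)`
      (∀ i j, HasDerivAt (fun s => D1 (n + 1) s i j)
        (((C1 (n + 1) t + C2 (n + 1) t) * shiftL1 n
          - shiftL1 (n + 1) * (C1 (n + 2) t + C2 (n + 2) t)) i j) t) ∧
      (∀ i j, HasDerivAt (fun s => D2 (n + 1) s i j)
        (((C1 (n + 1) t + C2 (n + 1) t) * shiftL2 n
          - shiftL2 (n + 1) * (C1 (n + 2) t + C2 (n + 2) t)) i j) t) ∧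
      -- `Ċ_{n+1,i}(t) = C_{n+1}(t) D_{n,i}(t) − D_{n+1,i}(t) C_{n+1}(t)`
      (∀ i j, HasDerivAt (fun s => C1 (n + 1) s i j)
        (((C1 (n + 1) t + C2 (n + 1) t) * D1 n t
          - D1 (n + 1) t * (C1 (n + 1) t + C2 (n + 1) t)) i j) t) ∧
      (∀ i j, HasDerivAt (fun s => C2 (n + 1) s i j)
        (((C1 (n + 1) t + C2 (n + 1) t) * D2 n t
          - D2 (n + 1) t * (C1 (n + 1) t + C2 (n + 1) t)) i j) t) := by
  
  intro n t
  obtain _ | k := n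
  · -- level 1 : use the master lemma for level 1
    have hL0x : ∀ v : Fin 2 → ℝ, ∑ j, shiftL1 0 0 j * v j = v 0 := by
      intro v
      simp [shiftL1, Nat.reduceAdd, Fin.sum_univ_two]
    have hL0y : ∀ v : Fin 2 → ℝ, ∑ j, shiftL2 0 0 j * v j = v 1 := by
      intro v
      simp [shiftL2, Nat.reduceAdd, Fin.sum_univ_two]
    have hLinjx : ∀ M : Matrix (Fin 2) (Fin 2) ℝ, M * shiftL1 1 = 0 → M = 0 := by
      intro M h
      ext i j
      fin_cases j
      · have := congrFun (congrFun h i) 0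
        simpa [Matrix.mul_apply, shiftL1, Nat.reduceAdd, Fin.sum_univ_two] using this
      · have := congrFun (congrFun h i) 1
        simpa [Matrix.mul_apply, shiftL1, Nat.reduceAdd, Fin.sum_univ_two] using this
    have hLinjy : ∀ M : Matrix (Fin 2) (Fin 2) ℝ, M * shiftL2 1 = 0 → M = 0 := by
      intro M h
      ext i j
      fin_cases j
      · have := congrFun (congrFun h i) 1
        simpa [Matrix.mul_apply, shiftL2, Nat.reduceAdd, Fin.sum_univ_two] using this
      · have := congrFun (congrFun h i) 2
        simpa [Matrix.mul_apply, shiftL2, Nat.reduceAdd, Fin.sum_univ_two] using this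
    have h30x : ∀ (s x y : ℝ), x * P 0 s (x, y) 0
        = P 1 s (x, y) 0 + D1 0 s 0 0 * P 0 s (x, y) 0 := by
      intro s x y
      have := congrFun (h3x0 s x y) 0
      simpa [toda_mv_apply, shiftL1, Nat.reduceAdd, Fin.sum_univ_two, Fin.sum_univ_one]
        using this
    have h30y : ∀ (s x y : ℝ), y * P 0 s (x, y) 0
        = P 1 s (x, y) 1 + D2 0 s 0 0 * P 0 s (x, y) 0 := by
      intro s x y
      have := congrFun (h3y0 s x y) 0
      simpa [toda_mv_apply, shiftL2, Nat.reduceAdd, Fin.sum_univ_two, Fin.sum_univ_one]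
        using this
    have X := toda_master_level1 P (fun n t => C1 n t + C2 n t) shiftL1 D1 C1
      (fun xy => xy.1) 0 t h30x (fun s x y => h3x 0 s x y) hL0x hLinjx
      (fun m x y s j => hdotP m x y s j) (hD1 0 0 0).differentiableAt
      (fun i j => (hD1 1 i j).differentiableAt) (fun i j => (hC1 1 i j).differentiableAt)
      (hli t)
    have Y := toda_master_level1 P (fun n t => C1 n t + C2 n t) shiftL2 D2 C2
      (fun xy => xy.2) 1 t h30y (fun s x y => h3y 0 s x y) hL0y hLinjy
      (fun m x y s j => hdotP m x y s j) (hD2 0 0 0).differentiableAt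
      (fun i j => (hD2 1 i j).differentiableAt) (fun i j => (hC2 1 i j).differentiableAt)
      (hli t)
    exact ⟨X.1, Y.1, X.2, Y.2⟩
  · -- level k+2 : use the general master lemma
    have X := toda_master_general P (fun n t => C1 n t + C2 n t) shiftL1 D1 C1
      (fun xy => xy.1) k t (fun s x y => h3x k s x y) (fun s x y => h3x (k+1) s x y)
      (fun m x y s j => hdotP m x y s j)
      (fun i j => (hD1 (k+2) i j).differentiableAt)
      (fun i j => (hC1 (k+2) i j).differentiableAt) (hli t)
    have Y := toda_master_general P (fun n t => C1 n t + C2 n t) shiftL2 D2 C2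
      (fun xy => xy.2) k t (fun s x y => h3y k s x y) (fun s x y => h3y (k+1) s x y)
      (fun m x y s j => hdotP m x y s j)
      (fun i j => (hD2 (k+2) i j).differentiableAt)
      (fun i j => (hC2 (k+2) i j).differentiableAt) (hli t)
    exact ⟨X.1, Y.1, X.2, Y.2⟩
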